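/- Let A, B, B' be strings with ED(B', B) = 1, and suppose B' admits a partition into m contiguous intervals, each of length at most 1 or equal to a substring of A at a shift of at most k₀, with a monotone matching as in the decomposition lemma. Then B admits a partition into m+2 contiguous intervals, each of length at most 1 or equal to a substring of A at a shift of at most k₀+1, with a monotone matching. -/

import Mathlib

open Finset

/-- Cost structure for the Levenshtein distance (as in the former Mathlib
`Mathlib/Data/List/EditDistance/Defs.lean`), specialised to `ℕ`-valued costs. -/
structure Levenshtein.Cost (α β : Type*) where
  delete : α → ℕ
  insert : β → ℕ
  substitute : α → β → ℕ

/-- The default cost: unit cost for deletion, insertion and substitution of distinct letters. -/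
def Levenshtein.defaultCost {α : Type*} [DecidableEq α] : Levenshtein.Cost α α where
  delete _ := 1
  insert _ := 1
  substitute a b := if a = b then 0 else 1

/-- Levenshtein distance, by the recursion that characterised the former Mathlib definition. -/
def levenshtein {α β : Type*} (C : Levenshtein.Cost α β) : List α → List β → ℕ
  | [], [] => 0
  | [], y :: ys => C.insert y + levenshtein C [] ys
  | x :: xs, [] => C.delete x + levenshtein C xs []
  | x :: xs, y :: ys =>
    min (C.delete x + levenshtein C xs (y :: ys))
      (min (C.insert y + levenshtein C (x :: xs) ys) (C.substitute x y + levenshtein C xs ys))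

/-- Edit distance (Levenshtein distance with unit costs). -/
def ED {α : Type*} [DecidableEq α] (A B : List α) : ℕ :=
  levenshtein Levenshtein.defaultCost A B

/-- `HasDecomp A B m s` says that `B` can be partitioned into `m` contiguous intervals
(given by their lengths `L`; the `i`-th interval starts at the sum of the earlier
lengths) together with a monotone matching `f` assigning to matched intervals a
starting position in `A`, such that unmatched intervals have length at most `1` and
each matched interval of `B` equals a substring of `A` whose starting position is
shifted by at most `s`. -/
def HasDecomp {α : Type*} (A B : List α) (m s : ℕ) : Prop :=
  ∃ (L : Fin m → ℕ) (f : Fin m → Option ℕ),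
    (∑ i, L i) = B.length ∧
    (∀ i, f i = none → L i ≤ 1) ∧
    (∀ i iA, f i = some iA →
      iA + L i ≤ A.length ∧
      |(iA : ℤ) - (∑ t ∈ univ.filter (· < i), L t : ℤ)| ≤ s ∧
      (A.drop iA).take (L i) =
        (B.drop (∑ t ∈ univ.filter (· < i), L t)).take (L i)) ∧
    (∀ i i' iA iA', f i = some iA → f i' = some iA' → i < i' → iA + L i ≤ iA')

@[simp] lemma levenshtein_nil_nil' {α β : Type*} (C : Levenshtein.Cost α β) :
    levenshtein C [] [] = 0 := by rw [levenshtein]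

@[simp] lemma levenshtein_nil_cons' {α β : Type*} (C : Levenshtein.Cost α β) (y : β) (ys : List β) :
    levenshtein C [] (y :: ys) = C.insert y + levenshtein C [] ys := by rw [levenshtein]

@[simp] lemma levenshtein_cons_nil' {α β : Type*} (C : Levenshtein.Cost α β) (x : α) (xs : List α) :
    levenshtein C (x :: xs) [] = C.delete x + levenshtein C xs [] := by rw [levenshtein]

lemma levenshtein_cons_cons {α β : Type*} (C : Levenshtein.Cost α β) (x : α) (xs : List α)
    (y : β) (ys : List β) :
    levenshtein C (x :: xs) (y :: ys) =
      min (C.delete x + levenshtein C xs (y :: ys))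
        (min (C.insert y + levenshtein C (x :: xs) ys) (C.substitute x y + levenshtein C xs ys)) := by
  rw [levenshtein]

@[simp] lemma defaultCost_delete' {α : Type*} [DecidableEq α] (a : α) :
    (Levenshtein.defaultCost (α := α)).delete a = 1 := rfl

@[simp] lemma defaultCost_insert' {α : Type*} [DecidableEq α] (a : α) :
    (Levenshtein.defaultCost (α := α)).insert a = 1 := rfl

@[simp] lemma defaultCost_substitute' {α : Type*} [DecidableEq α] (a b : α) :
    (Levenshtein.defaultCost (α := α)).substitute a b = if a = b then 0 else 1 := rfl

lemma lev_nil_left {α : Type*} [DecidableEq α] (ys : List α) :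
    levenshtein Levenshtein.defaultCost ([] : List α) ys = ys.length := by
  induction ys with
  | nil => simp
  | cons y ys ih => simp [ih]; omega

lemma lev_nil_right {α : Type*} [DecidableEq α] (xs : List α) :
    levenshtein Levenshtein.defaultCost xs ([] : List α) = xs.length := by
  induction xs with
  | nil => simp
  | cons x xs ih => simp [ih]; omega

lemma lev_eq_zero {α : Type*} [DecidableEq α] : ∀ (xs ys : List α),
    levenshtein Levenshtein.defaultCost xs ys = 0 → xs = ys := by
  intro xs
  induction xs with
  | nil => intro ys h; rw [lev_nil_left] at h; simpa using (List.length_eq_zero_iff.mp h).symm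
  | cons x xs ih =>
    intro ys h
    cases ys with
    | nil => rw [lev_nil_right] at h; simp at h
    | cons y ys =>
      rw [levenshtein_cons_cons] at h
      simp only [Nat.min_eq_zero_iff] at h
      rcases h with h | h | h
      · simp [Levenshtein.defaultCost] at h
      · simp [Levenshtein.defaultCost] at h
      · rcases Nat.add_eq_zero.mp h with ⟨h1, h2⟩
        have : x = y := by by_contra hne; simp [Levenshtein.defaultCost, hne] at h1
        rw [this, ih ys h2]

lemma one_edit {α : Type*} [DecidableEq α] : ∀ (B' B : List α),
    levenshtein Levenshtein.defaultCost B' B ≤ 1 →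
    ∃ u x y v : List α, x.length ≤ 1 ∧ y.length ≤ 1 ∧ B' = u ++ y ++ v ∧ B = u ++ x ++ v := by
  intro B'
  induction B' with
  | nil =>
    intro B h
    rw [lev_nil_left] at h
    exact ⟨[], B, [], [], h, by simp, by simp, by simp⟩
  | cons a as ih =>
    intro B h
    cases B with
    | nil =>
      rw [lev_nil_right] at h
      exact ⟨[], [], a :: as, [], by simp, by simpa using h, by simp, by simp⟩
    | cons b bs =>
      rw [levenshtein_cons_cons] at h
      simp only [min_le_iff] at h
      rcases h with h | h | h
      · -- delete a : 1 + lev as (b::bs) ≤ 1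
        have h0 : levenshtein Levenshtein.defaultCost as (b :: bs) = 0 := by
          simp at h; omega
        have := lev_eq_zero _ _ h0
        exact ⟨[], [], [a], b :: bs, by simp, by simp, by simp [this], by simp [this]⟩
      · -- insert b
        have h0 : levenshtein Levenshtein.defaultCost (a :: as) bs = 0 := by
          simp at h; omega
        have := lev_eq_zero _ _ h0
        exact ⟨[], [b], [], a :: as, by simp, by simp, by simp, by simp [this]⟩
      · by_cases hab : a = b
        · subst hab
          have h' : levenshtein Levenshtein.defaultCost as bs ≤ 1 := by
            simpa using h
          obtain ⟨u, x, y, v, hx, hy, h1, h2⟩ := ih bs h'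
          exact ⟨a :: u, x, y, v, hx, hy, by simp [h1], by simp [h2]⟩
        · have h0 : levenshtein Levenshtein.defaultCost as bs = 0 := by
            simp [hab] at h; omega
          have := lev_eq_zero _ _ h0
          exact ⟨[], [b], [a], as, by simp, by simp, by simp, by simp [this]⟩

lemma sum_filter_lt_eq {m : ℕ} (l : ℕ → ℕ) (i : Fin m) :
    ∑ t ∈ Finset.univ.filter (fun t => t < i), l t.val = ∑ t ∈ Finset.range i.val, l t := by
  rw [Finset.sum_filter]
  have h1 : ∑ t : Fin m, (if t < i then l t.val else 0)
      = ∑ t : Fin m, (fun k => if k < i.val then l k else 0) t.val := by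
    apply Finset.sum_congr rfl; intro t _; simp only [Fin.lt_def]
  rw [h1, Fin.sum_univ_eq_sum_range (fun k => if k < i.val then l k else 0) m,
    ← Finset.sum_filter]
  congr 1
  ext k
  simp only [Finset.mem_filter, Finset.mem_range]
  have := i.isLt
  omega

lemma take_drop_of_take_eq {α : Type*} {X Y : List α} {p : ℕ} (h : X.take p = Y.take p)
    {d n : ℕ} (hdn : d + n ≤ p) : (X.drop d).take n = (Y.drop d).take n := by
  have key : ∀ Z : List α, (Z.drop d).take n = ((Z.take p).drop d).take n := by
    intro Z
    rw [List.drop_take, List.take_take]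
    congr 1
    omega
  rw [key X, key Y, h]

lemma drop_take_eq {α : Type*} (Z : List α) (d e n : ℕ) :
    ((Z.drop d).take n).drop e = (Z.drop (d + e)).take (n - e) := by
  rw [List.drop_take, List.drop_drop]


/-- Inductive step of the structural decomposition lemma: a single edit operation
turning `B'` into `B` splits one interval into three and changes shifts by at most
one. -/
theorem decomp_inductive_step {α : Type*} [DecidableEq α] (A B B' : List α)
    (m k₀ : ℕ) (hedit : ED B' B = 1) (hdec : HasDecomp A B' m k₀) :
    HasDecomp A B (m + 2) (k₀ + 1) := by
  obtain ⟨L, f, hsum, hnone, hsome, hmono⟩ := hdec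
  obtain ⟨u, x, y, v, hx, hy, hB', hB⟩ := one_edit B' B (le_of_eq hedit)
  set p := u.length with hp
  set ex := x.length with hex
  set ey := y.length with hey
  have hBlen : B.length = p + ex + v.length := by simp [hB, hp, hex]; omega
  have hB'len : B'.length = p + ey + v.length := by simp [hB', hp, hey]; omega
  have htakeB : B.take p = B'.take p := by
    rw [hB, hB']
    rw [show u ++ x ++ v = u ++ (x ++ v) by simp, show u ++ y ++ v = u ++ (y ++ v) by simp]
    rw [List.take_left, List.take_left]
  have hdropB : B.drop (p + ex) = v := by
    have h := List.drop_left (l₁ := u ++ x) (l₂ := v)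
    rw [List.append_assoc] at h
    rw [hB, List.append_assoc]
    simpa [hp, hex, List.length_append] using h
  have hdropB' : B'.drop (p + ey) = v := by
    have h := List.drop_left (l₁ := u ++ y) (l₂ := v)
    rw [List.append_assoc] at h
    rw [hB', List.append_assoc]
    simpa [hp, hey, List.length_append] using h
  rcases Nat.eq_zero_or_pos m with hm | hm
  · -- degenerate case m = 0
    subst hm
    have hB'0 : B'.length = 0 := by rw [← hsum]; simp
    have hB1 : B.length ≤ 1 := by omega
    refine ⟨fun i => if i.val = 0 then B.length else 0, fun _ => none, ?_, ?_, ?_, ?_⟩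
    · simp [Fin.sum_univ_succ]
    · intro i _
      dsimp only
      split <;> omega
    · intro i iA h; simp at h
    · intro i i' iA iA' h; simp at h
  -- main case, m ≥ 1
  set l : ℕ → ℕ := fun k => if h : k < m then L ⟨k, h⟩ else 0 with hl
  set g : ℕ → Option ℕ := fun k => if h : k < m then f ⟨k, h⟩ else none with hg
  have hlL : ∀ t : Fin m, L t = l t.val := fun t => by simp [hl, t.isLt]
  have hgf : ∀ k (h : k < m), g k = f ⟨k, h⟩ := fun k h => by simp [hg, h]
  set P : ℕ → ℕ := fun k => ∑ t ∈ Finset.range k, l t with hPdef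
  have hPsucc : ∀ k, P (k+1) = P k + l k := fun k => Finset.sum_range_succ _ _
  have hPmono : ∀ {s t : ℕ}, s ≤ t → P s ≤ P t := fun h =>
    Finset.sum_le_sum_of_subset (Finset.range_subset_range.mpr h)
  have hPm : P m = B'.length := by
    rw [← hsum]
    rw [show ∑ i, L i = ∑ i : Fin m, l i.val from Finset.sum_congr rfl fun t _ => hlL t]
    exact (Fin.sum_univ_eq_sum_range l m).symm
  have hP0 : P 0 = 0 := by simp [hPdef]
  set j := Nat.findGreatest (fun k => P k ≤ p) (m-1) with hj
  have hjle : j ≤ m - 1 := Nat.findGreatest_le _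
  have hjm : j < m := by omega
  have hPj : P j ≤ p := by
    rw [hj]
    exact Nat.findGreatest_spec (P := fun k => P k ≤ p) (Nat.zero_le _) (by omega)
  have hplen : p + ey ≤ B'.length := by omega
  have hPj1 : p + ey ≤ P (j+1) := by
    rcases eq_or_lt_of_le hjle with he | hlt
    · rw [show j + 1 = m by omega, hPm]; omega
    · have hgt := Nat.findGreatest_is_greatest (Nat.lt_succ_self j) (by omega : j+1 ≤ m-1)
      simp only [Nat.succ_eq_add_one] at hgt
      omega
  set a := p - P j with ha
  set c := l j - a - ey with hcdef
  have haec : a + ey + c = l j := by have := hPsucc j; omega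
  have hpa : P j + a = p := by omega
  -- new length and matching functions
  set l2 : ℕ → ℕ := fun k => if k < j then l k else if k = j then a else
    if k = j+1 then ex else if k = j+2 then c else l (k-2) with hl2
  set g2 : ℕ → Option ℕ := fun k => if k ≤ j then g k else if k = j+1 then none else
    if k = j+2 then (g j).map (· + (a + ey)) else g (k-2) with hg2
  have l2a : ∀ k, k < j → l2 k = l k := by intro k hk; simp [hl2, hk]
  have l2b : l2 j = a := by simp [hl2]
  have l2c : l2 (j+1) = ex := by simp [hl2]
  have l2d : l2 (j+2) = c := by simp [hl2]
  have l2e : ∀ k, j+3 ≤ k → l2 k = l (k-2) := by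
    intro k hk
    have h1 : ¬ k < j := by omega
    have h2 : k ≠ j := by omega
    have h3 : k ≠ j+1 := by omega
    have h4 : k ≠ j+2 := by omega
    simp [hl2, h1, h2, h3, h4]
  have l2le : ∀ k, k ≤ j → l2 k ≤ l k := by
    intro k hk
    rcases eq_or_lt_of_le hk with he | hlt
    · subst he; rw [l2b]; omega
    · rw [l2a k hlt]
  have g2a : ∀ k, k ≤ j → g2 k = g k := by intro k hk; simp [hg2, hk]
  have g2c : g2 (j+1) = none := by simp [hg2]
  have g2d : g2 (j+2) = (g j).map (· + (a + ey)) := by simp [hg2]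
  have g2e : ∀ k, j+3 ≤ k → g2 k = g (k-2) := by
    intro k hk
    have h1 : ¬ k ≤ j := by omega
    have h3 : k ≠ j+1 := by omega
    have h4 : k ≠ j+2 := by omega
    simp [hg2, h1, h3, h4]
  set P2 : ℕ → ℕ := fun k => ∑ t ∈ Finset.range k, l2 t with hP2def
  have hP2succ : ∀ k, P2 (k+1) = P2 k + l2 k := fun k => Finset.sum_range_succ _ _
  have hP2mono : ∀ {s t : ℕ}, s ≤ t → P2 s ≤ P2 t := fun h =>
    Finset.sum_le_sum_of_subset (Finset.range_subset_range.mpr h)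
  have hP2a : ∀ k, k ≤ j → P2 k = P k := by
    intro k hk
    apply Finset.sum_congr rfl
    intro t ht
    rw [Finset.mem_range] at ht
    exact l2a t (by omega)
  have hP2j1 : P2 (j+1) = p := by rw [hP2succ, hP2a j le_rfl, l2b]; omega
  have hP2j2 : P2 (j+2) = p + ex := by rw [hP2succ, hP2j1, l2c]
  have hP2e : ∀ k, j+3 ≤ k → P2 k + ey = P (k-2) + ex := by
    intro k hk
    induction k, hk using Nat.le_induction with
    | base =>
      have h1 := hP2succ (j+2)
      have h2 := hPsucc j
      rw [l2d] at h1
      rw [show j+3-2 = j+1 by omega, h2, h1, hP2j2]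
      omega
    | succ k hk ih =>
      have h1 := hP2succ k
      have h2 := hPsucc (k-2)
      rw [l2e k hk] at h1
      rw [show k+1-2 = (k-2)+1 by omega, h2]
      omega
  refine ⟨fun i => l2 i.val, fun i => g2 i.val, ?_, ?_, ?_, ?_⟩
  · -- total length
    rw [Fin.sum_univ_eq_sum_range l2 (m+2)]
    have h2 := hP2e (m+2) (by omega)
    rw [show m+2-2 = m by omega, hPm] at h2
    have : P2 (m+2) = ∑ t ∈ Finset.range (m+2), l2 t := rfl
    omega
  · -- unmatched intervals have length ≤ 1
    intro i hi
    dsimp only at hi ⊢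
    set k := i.val with hk
    by_cases hk1 : k ≤ j
    · rw [g2a k hk1, hgf k (by omega)] at hi
      have h := hnone _ hi
      rw [hlL] at h
      exact le_trans (l2le k hk1) h
    · by_cases hk2 : k = j+1
      · rw [hk2, l2c]; exact hx
      · by_cases hk3 : k = j+2
        · rw [hk3, g2d] at hi
          rw [hk3, l2d]
          have hgj : g j = none := by
            cases hgj : g j with
            | none => rfl
            | some z => rw [hgj] at hi; simp at hi
          rw [hgf j hjm] at hgj
          have h := hnone _ hgj
          rw [hlL] at h
          simp only at h
          omega
        · have hk4 : j+3 ≤ k := by omega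
          have hkm : k - 2 < m := by have := i.isLt; omega
          rw [g2e k hk4, hgf _ hkm] at hi
          have h := hnone _ hi
          rw [hlL] at h
          rw [l2e k hk4]
          exact h
  · -- matched intervals
    intro i iA hfi
    dsimp only at hfi ⊢
    have hkm2 := i.isLt
    have hPS : (∑ t ∈ univ.filter (· < i), l2 t.val) = P2 i.val := sum_filter_lt_eq l2 i
    have hPSZ : (∑ t ∈ univ.filter (· < i), ((l2 t.val : ℕ) : ℤ)) = ((P2 i.val : ℤ)) := by
      rw [← Nat.cast_sum, hPS]
    rw [hPS, hPSZ]
    set k := i.val with hk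
    have hold : ∀ (o : ℕ) (ho : o < m) (iz : ℕ), f ⟨o, ho⟩ = some iz →
        iz + l o ≤ A.length ∧ |(iz : ℤ) - (P o : ℤ)| ≤ (k₀ : ℤ) ∧
        (A.drop iz).take (l o) = (B'.drop (P o)).take (l o) := by
      intro o ho iz hfo
      obtain ⟨h1, h2, h3⟩ := hsome _ _ hfo
      simp only [hlL] at h1 h2 h3
      rw [sum_filter_lt_eq l ⟨o, ho⟩] at h3
      rw [← Nat.cast_sum, sum_filter_lt_eq l ⟨o, ho⟩] at h2
      exact ⟨h1, h2, h3⟩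
    by_cases hk1 : k ≤ j
    · -- left part (k < j) or the split-left (k = j)
      rw [g2a k hk1, hgf k (by omega)] at hfi
      obtain ⟨hlen0, hshift0, hseg0⟩ := hold k (by omega) iA hfi
      rw [hP2a k hk1]
      refine ⟨by have := l2le k hk1; omega, ?_, ?_⟩
      · rw [abs_le] at hshift0 ⊢
        constructor <;> push_cast <;> push_cast at hshift0 <;> omega
      · rcases eq_or_lt_of_le hk1 with he | hlt
        · -- k = j : take prefix of length a
          rw [he, l2b]
          have E' : (A.drop iA).take a = (B'.drop (P j)).take a := by
            have h := congrArg (fun z => List.take a z) hseg0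
            rw [he] at h
            simpa [List.take_take, min_eq_left (show a ≤ l j by omega)] using h
          rw [E']
          refine take_drop_of_take_eq htakeB.symm ?_
          omega
        · rw [l2a k hlt, hseg0]
          refine take_drop_of_take_eq htakeB.symm ?_
          have h1 : P k + l k = P (k+1) := (hPsucc k).symm
          have h2 := hPmono (show k+1 ≤ j by omega)
          omega
    · by_cases hk2 : k = j+1
      · rw [hk2, g2c] at hfi; simp at hfi
      · by_cases hk3 : k = j+2
        · -- split-right
          rw [hk3, g2d] at hfi
          obtain ⟨iA0, hgj, hiA⟩ := Option.map_eq_some_iff.mp hfi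
          rw [hgf j hjm] at hgj
          obtain ⟨hlen0, hshift0, hseg0⟩ := hold j hjm iA0 hgj
          rw [hk3, hP2j2, l2d]
          refine ⟨by omega, ?_, ?_⟩
          · rw [abs_le] at hshift0 ⊢
            constructor <;> push_cast <;> push_cast at hshift0 <;> omega
          · have h := congrArg (fun z => List.drop (a + ey) z) hseg0
            rw [drop_take_eq, drop_take_eq] at h
            rw [show P j + (a + ey) = p + ey by omega, hdropB'] at h
            rw [show l j - (a + ey) = c by omega] at h
            rw [← hiA, hdropB, h]
        · -- shifted old intervals
          have hk4 : j+3 ≤ k := by omega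
          have hkm : k - 2 < m := by omega
          rw [g2e k hk4, hgf _ hkm] at hfi
          obtain ⟨hlen0, hshift0, hseg0⟩ := hold (k-2) hkm iA hfi
          rw [l2e k hk4]
          have hPP := hP2e k hk4
          have hPo : p + ey ≤ P (k-2) := le_trans hPj1 (hPmono (by omega))
          have hP2k : p + ex ≤ P2 k := by rw [← hP2j2]; exact hP2mono (by omega)
          refine ⟨hlen0, ?_, ?_⟩
          · rw [abs_le] at hshift0 ⊢
            constructor <;> push_cast <;> push_cast at hshift0 <;> omega
          · rw [hseg0]
            have hdd : B'.drop (P (k-2)) = B.drop (P2 k) := by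
              have e1 : B'.drop (P (k-2)) = (B'.drop (p+ey)).drop (P (k-2) - (p+ey)) := by
                rw [List.drop_drop]; congr 1; omega
              have e2 : B.drop (P2 k) = (B.drop (p+ex)).drop (P2 k - (p+ex)) := by
                rw [List.drop_drop]; congr 1; omega
              rw [e1, e2, hdropB, hdropB', show P (k-2) - (p+ey) = P2 k - (p+ex) by omega]
            rw [hdd]
  · -- monotonicity
    intro i i' iA iA' h1 h2 hlt
    dsimp only at h1 h2 ⊢
    have hkm2 := i.isLt
    have hkm2' := i'.isLt
    set k := i.val with hk
    set k' := i'.val with hk'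
    have hltk : k < k' := hlt
    have hnotj1 : ∀ (z iz : ℕ), g2 z = some iz → z ≠ j+1 := by
      intro z iz hz hzz
      rw [hzz, g2c] at hz; simp at hz
    have useold : ∀ (o o' : ℕ) (ho : o < m) (ho' : o' < m) (iz iz' : ℕ),
        f ⟨o, ho⟩ = some iz → f ⟨o', ho'⟩ = some iz' → o < o' → iz + l o ≤ iz' := by
      intro o o' ho ho' iz iz' hfo hfo' hoo
      have h := hmono _ _ _ _ hfo hfo' (by exact Fin.mk_lt_mk.mpr hoo)
      rwa [hlL] at h
    by_cases hA : k ≤ j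
    · rw [g2a k hA, hgf k (by omega)] at h1
      by_cases hB1 : k' ≤ j
      · rw [g2a k' hB1, hgf k' (by omega)] at h2
        have hm1 := useold k k' (by omega) (by omega) iA iA' h1 h2 hltk
        have := l2le k hA
        omega
      · by_cases hB2 : k' = j+2
        · rw [hB2, g2d] at h2
          obtain ⟨iA0, hgj, hiA⟩ := Option.map_eq_some_iff.mp h2
          rw [hgf j hjm] at hgj
          rcases eq_or_lt_of_le hA with he | hlt2
          · have hfin : (⟨k, (by omega : k < m)⟩ : Fin m) = ⟨j, hjm⟩ := Fin.ext he
            rw [hfin] at h1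
            rw [h1] at hgj
            have hiA0 : iA0 = iA := by injection hgj.symm
            rw [he, l2b]
            omega
          · have hm1 := useold k j (by omega) hjm iA iA0 h1 hgj hlt2
            have := l2le k hA
            omega
        · have hB3 : j+3 ≤ k' := by have := hnotj1 k' iA' h2; omega
          rw [g2e k' hB3, hgf _ (by omega)] at h2
          have hm1 := useold k (k'-2) (by omega) (by omega) iA iA' h1 h2 (by omega)
          have := l2le k hA
          omega
    · by_cases hA2 : k = j+2
      · rw [hA2, g2d] at h1
        obtain ⟨iA0, hgj, hiA⟩ := Option.map_eq_some_iff.mp h1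
        rw [hgf j hjm] at hgj
        have hB3 : j+3 ≤ k' := by have := hnotj1 k' iA' h2; omega
        rw [g2e k' hB3, hgf _ (by omega)] at h2
        have hm1 := useold j (k'-2) hjm (by omega) iA0 iA' hgj h2 (by omega)
        rw [hA2, l2d]
        omega
      · have hA3 : j+3 ≤ k := by have := hnotj1 k iA h1; omega
        have hB3 : j+3 ≤ k' := by omega
        rw [g2e k hA3, hgf _ (by omega)] at h1
        rw [g2e k' hB3, hgf _ (by omega)] at h2
        have hm1 := useold (k-2) (k'-2) (by omega) (by omega) iA iA' h1 h2 (by omega)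
        rw [l2e k hA3]
        omega
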